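/- Let m, n be positive reals with m ≠ n, and 0 ≤ s ≤ t ≤ 1. Then the integral J(s,t) = ∫_s^t (cos(m π r) - cos(m π s)) · (-n π sin(n π r)) dr satisfies |J(s,t)| ≤ C(n/|n - m| + 1) for an absolute constant C. -/

import Mathlib

open Real intervalIntegral

private lemma hcos_deriv (k x : ℝ) :
    HasDerivAt (fun r : ℝ => Real.cos (k * r)) (-(k * Real.sin (k * x))) x := by
  have h := (Real.hasDerivAt_cos (k * x)).comp x ((hasDerivAt_id x).const_mul k)
  simpa [Function.comp_def, mul_comm] using h

private lemma cosdiff (x y : ℝ) : |Real.cos x - Real.cos y| ≤ 2 := by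
  calc |Real.cos x - Real.cos y| ≤ |Real.cos x| + |Real.cos y| := abs_sub _ _
    _ ≤ 1 + 1 := add_le_add (Real.abs_cos_le_one x) (Real.abs_cos_le_one y)
    _ = 2 := by norm_num

theorem bound_iv_resonance :
    ∃ C > 0, ∀ (s t m n : ℝ), 0 ≤ s → s ≤ t → t ≤ 1 → 0 < m → 0 < n → m ≠ n →
      |∫ r in s..t, (Real.cos (m * π * r) - Real.cos (m * π * s)) *
          (-(n * π * Real.sin (n * π * r)))| ≤ C * (n / |n - m| + 1) := by
  refine ⟨3, by norm_num, ?_⟩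
  intro s t m n hs hst ht1 hm hn hmn
  have hπ := Real.pi_pos
  set a := m * π with ha
  set b := n * π with hb
  have hapos : 0 < a := by positivity
  have hbpos : 0 < b := by positivity
  have habpos : 0 < a + b := by linarith
  have hab : a + b ≠ 0 := habpos.ne'
  have hab' : a - b ≠ 0 := sub_ne_zero.mpr (fun h => hmn (mul_right_cancel₀ hπ.ne' h))
  set c := Real.cos (a * s) with hc
  set F : ℝ → ℝ := fun r => -c * Real.cos (b * r) + (b / (2 * (a + b))) * Real.cos ((a + b) * r)
      - (b / (2 * (a - b))) * Real.cos ((a - b) * r) with hF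
  have hder : ∀ r, HasDerivAt F ((Real.cos (a * r) - c) * (-(b * Real.sin (b * r)))) r := by
    intro r
    have h1 := (hcos_deriv b r).const_mul (-c)
    have h2 := (hcos_deriv (a + b) r).const_mul (b / (2 * (a + b)))
    have h3 := (hcos_deriv (a - b) r).const_mul (b / (2 * (a - b)))
    have h : HasDerivAt F _ r := (h1.add h2).sub h3
    convert h using 1
    have e1 : (a + b) * r = a * r + b * r := by ring
    have e2 : (a - b) * r = a * r - b * r := by ring
    rw [e1, e2, Real.sin_add, Real.sin_sub]
    field_simp
    ring
  have hcontinuous : Continuous fun r =>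
      (Real.cos (a * r) - c) * (-(b * Real.sin (b * r))) := by fun_prop
  have hint : (∫ r in s..t, (Real.cos (a * r) - c) * (-(b * Real.sin (b * r)))) = F t - F s :=
    intervalIntegral.integral_eq_sub_of_hasDerivAt (fun r _ => hder r)
      (hcontinuous.intervalIntegrable s t)
  rw [hint]
  have key : F t - F s = (-c) * (Real.cos (b * t) - Real.cos (b * s))
      + (b / (2 * (a + b))) * (Real.cos ((a + b) * t) - Real.cos ((a + b) * s))
      - (b / (2 * (a - b))) * (Real.cos ((a - b) * t) - Real.cos ((a - b) * s)) := by
    simp only [hF]; ring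
  rw [key]
  have h1 : |(-c) * (Real.cos (b * t) - Real.cos (b * s))| ≤ 2 := by
    rw [abs_mul, abs_neg]
    calc |c| * |Real.cos (b * t) - Real.cos (b * s)| ≤ 1 * 2 :=
          mul_le_mul (Real.abs_cos_le_one _) (cosdiff _ _) (abs_nonneg _) zero_le_one
      _ = 2 := by norm_num
  have h2 : |(b / (2 * (a + b))) * (Real.cos ((a + b) * t) - Real.cos ((a + b) * s))| ≤ 1 := by
    rw [abs_mul]
    have hq : |b / (2 * (a + b))| = b / (2 * (a + b)) := abs_of_pos (by positivity)
    rw [hq]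
    calc b / (2 * (a + b)) * |Real.cos ((a + b) * t) - Real.cos ((a + b) * s)|
        ≤ b / (2 * (a + b)) * 2 := by
          exact mul_le_mul_of_nonneg_left (cosdiff _ _) (by positivity)
      _ = b / (a + b) := by field_simp
      _ ≤ 1 := by rw [div_le_one habpos]; linarith
  have h3 : |(b / (2 * (a - b))) * (Real.cos ((a - b) * t) - Real.cos ((a - b) * s))|
      ≤ n / |n - m| := by
    rw [abs_mul, abs_div]
    have hq : |(2 : ℝ) * (a - b)| = 2 * |a - b| := by
      rw [abs_mul]; norm_num
    rw [hq, abs_of_pos hbpos]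
    have habs : |a - b| = π * |n - m| := by
      rw [ha, hb, ← sub_mul, abs_mul, abs_of_pos hπ, abs_sub_comm]
      ring
    calc b / (2 * |a - b|) * |Real.cos ((a - b) * t) - Real.cos ((a - b) * s)|
        ≤ b / (2 * |a - b|) * 2 := by
          refine mul_le_mul_of_nonneg_left (cosdiff _ _) (by positivity)
      _ = b / |a - b| := by
          have hne : |a - b| ≠ 0 := abs_ne_zero.mpr hab'
          field_simp
      _ = n / |n - m| := by
          have hnm : |n - m| ≠ 0 := abs_ne_zero.mpr (sub_ne_zero.mpr (fun h => hmn h.symm))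
          rw [habs, hb]
          field_simp
  have hx : (0 : ℝ) ≤ n / |n - m| := div_nonneg hn.le (abs_nonneg _)
  calc |(-c) * (Real.cos (b * t) - Real.cos (b * s))
      + (b / (2 * (a + b))) * (Real.cos ((a + b) * t) - Real.cos ((a + b) * s))
      - (b / (2 * (a - b))) * (Real.cos ((a - b) * t) - Real.cos ((a - b) * s))|
      ≤ |(-c) * (Real.cos (b * t) - Real.cos (b * s))
        + (b / (2 * (a + b))) * (Real.cos ((a + b) * t) - Real.cos ((a + b) * s))|
        + |(b / (2 * (a - b))) * (Real.cos ((a - b) * t) - Real.cos ((a - b) * s))| :=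
        abs_sub _ _
    _ ≤ (|(-c) * (Real.cos (b * t) - Real.cos (b * s))|
        + |(b / (2 * (a + b))) * (Real.cos ((a + b) * t) - Real.cos ((a + b) * s))|)
        + |(b / (2 * (a - b))) * (Real.cos ((a - b) * t) - Real.cos ((a - b) * s))| :=
        add_le_add_left (abs_add_le _ _) _
    _ ≤ (2 + 1) + n / |n - m| := add_le_add (add_le_add h1 h2) h3
    _ ≤ 3 * (n / |n - m| + 1) := by linarith
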